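/- arXiv:2307.07661 — 2 statements merged into one kernel-verified Lean document; each statement's English description precedes it below -/
import Mathlib

section
/- (Goussarov's theorem.) Let D be a diagram category and let Ab(D_{≤n}) be the free abelian group on isomorphism classes of objects of D of order at most n. The map s : U_n(D^□) → Ab(D_{≤n}) defined on 0-cells by s(a) = Σ_{S ⊆ F_D(a), |S| ≤ n} a_S (where one isomorphism class may occur several times in the sum) is a well-defined group homomorphism and an isomorphism of abelian groups, with inverse s_− given by s_−(a) = Σ_{S ⊆ F_D(a)} (−1)^{|F_D(a) \ S|} a_S. -/
section Comb
variable {α : Type*} [Fintype α] [DecidableEq α]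

lemma sum_subset_sign (P : Finset α) :
    ∑ S : Finset α, (if S ⊆ P then ((-1:ℤ)^(S.card)) else 0)
      = if P = ∅ then 1 else 0 := by
  classical
  rw [← Finset.sum_filter]
  rw [show Finset.univ.filter (fun S : Finset α => S ⊆ P) = P.powerset by
    ext S; simp [Finset.mem_powerset]]
  exact Finset.sum_powerset_neg_one_pow_card

lemma sum_sdiff_sign (R : Finset α) :
    ∑ S : Finset α, (if R ⊆ S then ((-1:ℤ)^((S \ R).card)) else 0)
      = if R = Finset.univ then 1 else 0 := by
  classical
  rw [← Finset.sum_filter]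
  rw [Finset.sum_bij' (t := Rᶜ.powerset) (g := fun U => (-1:ℤ)^U.card)
    (fun S _ => S \ R) (fun U _ => R ∪ U) ?_ ?_ ?_ ?_ ?_]
  · rw [Finset.sum_powerset_neg_one_pow_card]
    congr 1
    simp [Finset.eq_univ_iff_forall, Finset.eq_empty_iff_forall_notMem]
  · intro S hS
    simp only [Finset.mem_powerset]
    exact (Finset.sdiff_subset_sdiff (Finset.subset_univ S) le_rfl).trans
      (by rw [← Finset.compl_eq_univ_sdiff])
  · intro U hU
    simp only [Finset.mem_filter, Finset.mem_univ, true_and]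
    exact Finset.subset_union_left
  · intro S hS
    exact Finset.union_sdiff_of_subset (Finset.mem_filter.mp hS).2
  · intro U hU
    exact Finset.union_sdiff_cancel_left
      (disjoint_compl_right.mono_right (Finset.mem_powerset.mp hU))
  · intro S hS
    rfl

lemma sum_compl_sign (R : Finset α) :
    ∑ S : Finset α, (if R ⊆ S then ((-1:ℤ)^(Sᶜ.card)) else 0)
      = if R = Finset.univ then 1 else 0 := by
  classical
  rw [← Equiv.sum_comp (Equiv.mk (compl : Finset α → Finset α) compl compl_compl compl_compl)
    (fun S => if R ⊆ S then ((-1:ℤ)^(Sᶜ.card)) else 0)]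
  simp only [Equiv.coe_fn_mk, compl_compl]
  have hc : ∀ S : Finset α, (if R ⊆ Sᶜ then ((-1:ℤ)^(S.card)) else 0)
      = (if S ⊆ Rᶜ then ((-1:ℤ)^(S.card)) else 0) :=
    fun S => if_congr Finset.subset_compl_comm rfl rfl
  simp only [hc]
  rw [sum_subset_sign]
  congr 1
  simp [Finset.eq_univ_iff_forall, Finset.eq_empty_iff_forall_notMem]

lemma sum_card_sign (R : Finset α) :
    ∑ S : Finset α, (if R ⊆ S then ((-1:ℤ)^(S.card)) else 0)
      = if R = Finset.univ then ((-1:ℤ)^(Fintype.card α)) else 0 := by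
  classical
  have h : ∀ S : Finset α, (if R ⊆ S then ((-1:ℤ)^(S.card)) else 0)
      = (-1:ℤ)^(R.card) * (if R ⊆ S then ((-1:ℤ)^((S \ R).card)) else 0) := by
    intro S
    by_cases hRS : R ⊆ S
    · rw [if_pos hRS, if_pos hRS, ← pow_add, ← Finset.card_sdiff_add_card_eq_card hRS,
        add_comm]
    · simp [hRS]
  simp only [h]
  rw [← Finset.mul_sum, sum_sdiff_sign]
  by_cases hR : R = Finset.univ
  · simp [hR, Finset.card_univ]
  · simp [hR]

/-- The equivalence between Bool-valued functions and finsets. -/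
def boolFinsetEquiv : (α → Bool) ≃ Finset α where
  toFun s := Finset.univ.filter (fun i => s i = true)
  invFun T := fun i => decide (i ∈ T)
  left_inv s := by funext i; by_cases h : s i = true <;> simp [h]
  right_inv T := by ext i; simp

lemma sum_bool_sign (L : Finset α) :
    ∑ s : α → Bool, (if ∀ ℓ ∈ L, s ℓ = true
        then ((-1:ℤ)^((Finset.univ.filter (fun i => s i = true)).card)) else 0)
      = if L = Finset.univ then ((-1:ℤ)^(Fintype.card α)) else 0 := by
  classical
  rw [← Equiv.sum_comp (boolFinsetEquiv (α := α)).symm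
    (fun s => if ∀ ℓ ∈ L, s ℓ = true
        then ((-1:ℤ)^((Finset.univ.filter (fun i => s i = true)).card)) else 0)]
  rw [← sum_card_sign L]
  refine Finset.sum_congr rfl fun T _ => ?_
  have h1 : Finset.univ.filter (fun i => (boolFinsetEquiv.symm T) i = true) = T := by
    ext i; simp [boolFinsetEquiv]
  have h2 : (∀ ℓ ∈ L, (boolFinsetEquiv.symm T) ℓ = true) ↔ L ⊆ T := by
    constructor
    · intro h x hx; have := h x hx; simpa [boolFinsetEquiv] using this
    · intro h x hx; simp [boolFinsetEquiv]; exact h hx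
  rw [h1]
  exact if_congr h2 rfl rfl

end Comb

open CategoryTheory Opposite

/-- The combinatorial `n`-cube: functions `[n] → {0,1}`. -/
abbrev Cube (n : ℕ) := Fin n → Bool

/-- A function between combinatorial cubes is a cube map if it admits a pair `(f, s)` where
`f : [m] → [n]` is injective, `s` assigns a fixed bit to every coordinate outside the image
of `f`, every coordinate of the input is copied to its `f`-image coordinate, and every point
of the image agrees with `s` outside the image of `f`. -/
def IsCubeMap {m n : ℕ} (a : Cube m → Cube n) : Prop :=
  ∃ (f : Fin m → Fin n) (s : Fin n → Bool),
    Function.Injective f ∧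
    (∀ (b : Cube m) (i : Fin m), b i = a b (f i)) ∧
    (∀ b ∈ Set.range a, ∀ i : Fin n, (∀ j, f j ≠ i) → b i = s i)

theorem isCubeMap_id (m : ℕ) : IsCubeMap (id : Cube m → Cube m) := by
  refine ⟨id, fun _ => false, fun _ _ h => h, fun _ _ => rfl, ?_⟩
  intro b _ i hi
  exact absurd rfl (hi i)

theorem IsCubeMap.comp {m n k : ℕ} {a : Cube m → Cube n} {b : Cube n → Cube k}
    (ha : IsCubeMap a) (hb : IsCubeMap b) : IsCubeMap (b ∘ a) := by
  classical
  obtain ⟨f₁, s₁, hf₁inj, hf₁, hs₁⟩ := ha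
  obtain ⟨f₂, s₂, hf₂inj, hf₂, hs₂⟩ := hb
  refine ⟨f₂ ∘ f₁, fun i => if h : ∃ j, f₂ j = i then s₁ h.choose else s₂ i,
    hf₂inj.comp hf₁inj, ?_, ?_⟩
  · intro c i
    calc c i = a c (f₁ i) := hf₁ c i
    _ = b (a c) (f₂ (f₁ i)) := hf₂ (a c) (f₁ i)
  · rintro d ⟨c, rfl⟩ i hi
    dsimp only
    by_cases h : ∃ j, f₂ j = i
    · rw [dif_pos h]
      have h1 : a c h.choose = (b ∘ a) c (f₂ h.choose) := hf₂ (a c) h.choose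
      rw [h.choose_spec] at h1
      rw [← h1]
      refine hs₁ _ ⟨c, rfl⟩ _ ?_
      intro j hj
      exact hi j (by rw [Function.comp_apply, hj, h.choose_spec])
    · rw [dif_neg h]
      exact hs₂ _ ⟨a c, rfl⟩ i (fun j hj => h ⟨j, hj⟩)

/-- The hom set of the cube category. -/
def CubeHom (m n : ℕ) := {a : Cube m → Cube n // IsCubeMap a}

/-- Objects of the cube category `Cb` are the combinatorial `n`-cubes. -/
structure CubeCat where
  n : ℕ

/-- The object of `Cb` corresponding to the combinatorial `n`-cube. -/
def cubeObj (n : ℕ) : CubeCat := ⟨n⟩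

instance : Category CubeCat where
  Hom A B := CubeHom A.n B.n
  id A := ⟨_root_.id, isCubeMap_id A.n⟩
  comp f g := ⟨g.1 ∘ f.1, f.2.comp g.2⟩

noncomputable instance (A B : CubeCat) : Fintype (A ⟶ B) := by
  classical
  exact Subtype.fintype _

/-- A cubical complex is a contravariant functor from the cube category to `Set`. -/
abbrev CubicalComplex := CubeCatᵒᵖ ⥤ Type

/-- `|f(∅)|`: the number of `1`s in the image corner of a map from the `0`-cube. -/
def cubeWeight {n : ℕ} (f : cubeObj 0 ⟶ cubeObj (n + 1)) : ℕ :=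
  (@Finset.filter _ (fun i : Fin (n + 1) => f.1 (fun j : Fin 0 => j.elim0) i = true)
    (fun i => instDecidableEqBool _ _) Finset.univ).card

/-- The alternating sum over the corners of an `(n+1)`-cell, i.e. the relation
`∑_{f ∈ Hom(C₀, C_{n+1})} (-1)^{|f(∅)|} · X(fᵒᵖ)(c)`. -/
noncomputable def relationElt (X : CubicalComplex) (n : ℕ)
    (c : X.obj (op (cubeObj (n + 1)))) :
    FreeAbelianGroup (X.obj (op (cubeObj 0))) :=
  ∑ f : cubeObj 0 ⟶ cubeObj (n + 1),
    ((-1 : ℤ) ^ cubeWeight f) • FreeAbelianGroup.of (X.map f.op c)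

/-- The subgroup of relations of the rank `n` finite type group. -/
noncomputable def relSubgroup (X : CubicalComplex) (n : ℕ) :
    AddSubgroup (FreeAbelianGroup (X.obj (op (cubeObj 0)))) :=
  AddSubgroup.closure (Set.range (relationElt X n))

/-- The rank `n` finite type group `Uₙ(X)` of a cubical complex `X`: generated by the
`0`-cells, subject to the alternating-corner-sum relations of the `(n+1)`-cells. -/
noncomputable def UGroup (X : CubicalComplex) (n : ℕ) : Type :=
  FreeAbelianGroup (X.obj (op (cubeObj 0))) ⧸ relSubgroup X n

noncomputable instance (X : CubicalComplex) (n : ℕ) : AddCommGroup (UGroup X n) := by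
  unfold UGroup; infer_instance

/-- The generator of `Uₙ(X)` corresponding to a `0`-cell. -/
noncomputable def mkU (X : CubicalComplex) (n : ℕ) (x : X.obj (op (cubeObj 0))) : UGroup X n :=
  QuotientAddGroup.mk (FreeAbelianGroup.of x)
/-- A diagram category structure on a category `C` equipped with a functor `F` to the category
of finite types: `F` is faithful, takes values in injective maps (so it is a functor to `Inj`),
every subset of `F a` is realized as the image of some arrow into `a` (subdiagrams exist), and
any two arrows into `a` with the same image differ by an isomorphism. -/
structure IsDiagramCat (C : Type) [SmallCategory C] (F : C ⥤ FintypeCat) : Prop where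
  faithful : ∀ {a b : C} (f g : a ⟶ b), F.map f = F.map g → f = g
  inj : ∀ {a b : C} (f : a ⟶ b), Function.Injective (F.map f)
  sub : ∀ (a : C) (S : Set (F.obj a)), ∃ (b : C) (f : b ⟶ a), Set.range (F.map f) = S
  unique_sub : ∀ {a b₁ b₂ : C} (f₁ : b₁ ⟶ a) (f₂ : b₂ ⟶ a),
    Set.range (F.map f₁) = Set.range (F.map f₂) → ∃ g : b₁ ≅ b₂, f₁ = g.hom ≫ f₂

/-- A representative of an `n`-cell of the cubical complex `D^□` of a diagram category:
a pair `(g : p → q, φ)` where `φ` is a bijective labelling of `F q ∖ im (F g)` by `[n]`.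
Such a pair is faithfully encoded (up to the isomorphism relation below) by the object `q`
together with the injection `lab = φ⁻¹ : [n] → F q`; the domain `p` of `g` is the subdiagram
of `q` on the complement of the range of `lab`. -/
structure PreCell (C : Type) [SmallCategory C] (F : C ⥤ FintypeCat) (n : ℕ) where
  q : C
  lab : Fin n → F.obj q
  inj : Function.Injective lab

/-- Isomorphism of pairs: an isomorphism of the underlying objects commuting with the
labellings (the component on the domains `p` exists automatically). -/
def CellRel (C : Type) [SmallCategory C] (F : C ⥤ FintypeCat) (n : ℕ)
    (c₁ c₂ : PreCell C F n) : Prop :=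
  ∃ h : c₁.q ≅ c₂.q, ∀ i, F.map h.hom (c₁.lab i) = c₂.lab i

/-- The set of `n`-cells of `D^□`: isomorphism classes of pairs `(g, φ)`. -/
def DCell (C : Type) [SmallCategory C] (F : C ⥤ FintypeCat) (n : ℕ) :=
  Quot (CellRel C F n)

/-- The `0`-cells of `D^□` are identified with isomorphism classes of objects of `D`. -/
def objCell (C : Type) [SmallCategory C] (F : C ⥤ FintypeCat) (a : C) : DCell C F 0 :=
  Quot.mk _ ⟨a, fun i => i.elim0, fun i => i.elim0⟩

/-- Given an `n`-cell with label injection `lab` and a cube map witness `(f, s)`, the subset of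
`F q` kept after deleting the labelled elements whose label lies outside the image of `f`
and has `s`-value `0`; this is `F(q) ∖ φ⁻¹s⁻¹{0}`. -/
def KeepSet {C : Type} [SmallCategory C] {F : C ⥤ FintypeCat} {m n : ℕ}
    (c : PreCell C F n) (f : Fin m → Fin n) (s : Fin n → Bool) : Set (F.obj c.q) :=
  (c.lab '' {ℓ : Fin n | (∀ j, f j ≠ ℓ) ∧ s ℓ = false})ᶜ

/-- A realization of the cubical complex `D^□` of a diagram category: a cubical complex whose
`n`-cells are the isomorphism classes of pairs `(g, φ)` and whose action along a cube map
`a : C_m → C_n` with associated pair `(f, s)` is given by the formula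
`D^□(aᵒᵖ)(g, φ) = (ι_{(im F(g) ∪ φ⁻¹s⁻¹{1}, F(q) ∖ φ⁻¹s⁻¹{0})}, f⁻¹ ∘ φ|_{φ⁻¹(im f)} ∘ F(ι_{F(q) ∖ φ⁻¹s⁻¹{0}}))`:
in terms of the label injections, the new cell is carried by the subdiagram `q'` of `q` on
`F(q) ∖ φ⁻¹s⁻¹{0}` (with inclusion `ι`), with `F(ι)(lab' i) = lab (f i)` for all `i`. -/
structure BoxComplex (C : Type) [SmallCategory C] (F : C ⥤ FintypeCat) where
  X : CubicalComplex
  cells : ∀ n : ℕ, X.obj (op (cubeObj n)) ≃ DCell C F n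
  map_spec : ∀ {m n : ℕ} (a : cubeObj m ⟶ cubeObj n) (f : Fin m → Fin n) (s : Fin n → Bool),
    Function.Injective f →
    (∀ (b : Cube m) (i : Fin m), b i = a.1 b (f i)) →
    (∀ b ∈ Set.range a.1, ∀ i : Fin n, (∀ j, f j ≠ i) → b i = s i) →
    ∀ (c : PreCell C F n) (c' : PreCell C F m) (ι : c'.q ⟶ c.q),
      Set.range (F.map ι) = KeepSet c f s →
      (∀ i, F.map ι (c'.lab i) = c.lab (f i)) →
      cells m (X.map a.op ((cells n).symm (Quot.mk _ c))) = Quot.mk _ c'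
attribute [local instance] FintypeCat.fintype

/-- Isomorphism classes of objects of a category. -/
def ObjClass (C : Type) [SmallCategory C] :=
  Quot (fun a b : C => Nonempty (a ≅ b))

theorem card_eq_of_iso {C : Type} [SmallCategory C] (F : C ⥤ FintypeCat) {a b : C}
    (h : a ≅ b) : Fintype.card (F.obj a) = Fintype.card (F.obj b) :=
  Fintype.card_congr (FintypeCat.equivEquivIso.symm (F.mapIso h))

/-- The order `|a| = |F(a)|` of an isomorphism class of objects of a diagram category. -/
noncomputable def orderC (C : Type) [SmallCategory C] (F : C ⥤ FintypeCat) :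
    ObjClass C → ℕ :=
  Quot.lift (fun a => Fintype.card (F.obj a)) (fun _ _ h => card_eq_of_iso F h.some)

/-- `Ab(D_{≤n})`: the free abelian group on isomorphism classes of objects of order at
most `n`. -/
noncomputable def AbLe (C : Type) [SmallCategory C] (F : C ⥤ FintypeCat) (n : ℕ) :=
  FreeAbelianGroup {c : ObjClass C // orderC C F c ≤ n}

noncomputable instance (C : Type) [SmallCategory C] (F : C ⥤ FintypeCat) (n : ℕ) :
    AddCommGroup (AbLe C F n) := by
  unfold AbLe; infer_instance

variable {C : Type} [SmallCategory C] {F : C ⥤ FintypeCat}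

/-- A chosen subdiagram `a_S` of `a` corresponding to `S ⊆ F(a)`. -/
noncomputable def IsDiagramCat.subObj (hF : IsDiagramCat C F) (a : C) (S : Set (F.obj a)) :
    C :=
  (hF.sub a S).choose

/-- The chosen subdiagram inclusion `ι_S : a_S → a`. -/
noncomputable def IsDiagramCat.subIncl (hF : IsDiagramCat C F) (a : C) (S : Set (F.obj a)) :
    hF.subObj a S ⟶ a :=
  (hF.sub a S).choose_spec.choose

theorem IsDiagramCat.range_subIncl (hF : IsDiagramCat C F) (a : C) (S : Set (F.obj a)) :
    Set.range (F.map (hF.subIncl a S)) = S :=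
  (hF.sub a S).choose_spec.choose_spec

theorem IsDiagramCat.card_subObj (hF : IsDiagramCat C F) (a : C) (S : Finset (F.obj a)) :
    Fintype.card (F.obj (hF.subObj a (S : Set (F.obj a)))) = S.card := by
  classical
  have e1 := Equiv.ofInjective _ (hF.inj (hF.subIncl a (S : Set (F.obj a))))
  have e2 := Equiv.setCongr (hF.range_subIncl a (S : Set (F.obj a)))
  rw [Fintype.card_congr (e1.trans e2)]
  simp
/-- The isomorphism class of the subdiagram `a_S`, as a generator of `Ab(D_{≤n})`, for
`S ⊆ F(a)` with `|S| ≤ n`. -/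
noncomputable def IsDiagramCat.subClsLe (hF : IsDiagramCat C F) (n : ℕ) (a : C)
    (S : Finset (F.obj a)) (h : S.card ≤ n) : {c : ObjClass C // orderC C F c ≤ n} :=
  ⟨Quot.mk _ (hF.subObj a (S : Set (F.obj a))),
    le_of_eq_of_le (hF.card_subObj a S) h⟩

/-- `s` on a generator: `s(a) = ∑_{S ⊆ F(a), |S| ≤ n} a_S ∈ Ab(D_{≤n})`. -/
noncomputable def sFormula (hF : IsDiagramCat C F) (n : ℕ) (a : C) : AbLe C F n :=
  ∑ S : Finset (F.obj a),
    if h : S.card ≤ n then FreeAbelianGroup.of (hF.subClsLe n a S h) else 0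

open scoped Classical in
/-- `s₋` on a generator: `s₋(a) = ∑_{S ⊆ F(a)} (-1)^{|F(a) ∖ S|} · a_S ∈ Uₙ(D^□)`. -/
noncomputable def sInvFormula (hF : IsDiagramCat C F) (B : BoxComplex C F) (n : ℕ) (a : C) :
    UGroup B.X n :=
  ∑ S : Finset (F.obj a),
    ((-1 : ℤ) ^ (Sᶜ.card)) •
      mkU B.X n ((B.cells 0).symm (objCell C F (hF.subObj a (S : Set (F.obj a)))))

section DiagramLemmas
variable {C : Type} [SmallCategory C] {F : C ⥤ FintypeCat}

/-- The 0-cell generator of `Uₙ` associated to an object. -/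
noncomputable def uCls (B : BoxComplex C F) (n : ℕ) (a : C) : UGroup B.X n :=
  mkU B.X n ((B.cells 0).symm (objCell C F a))

theorem objCell_congr {a b : C} (e : a ≅ b) : objCell C F a = objCell C F b :=
  Quot.sound ⟨e, fun i => i.elim0⟩

theorem uCls_congr (B : BoxComplex C F) (n : ℕ) {a b : C} (e : a ≅ b) :
    uCls B n a = uCls B n b := by
  unfold uCls; rw [objCell_congr e]

theorem map_apply_comp {a b c : C} (f : a ⟶ b) (g : b ⟶ c) (x : F.obj a) :
    F.map (f ≫ g) x = F.map g (F.map f x) := by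
  rw [F.map_comp]; rfl

theorem range_map_comp {a b c : C} (f : a ⟶ b) (g : b ⟶ c) :
    Set.range (F.map (f ≫ g)) = F.map g '' Set.range (F.map f) := by
  ext x
  constructor
  · rintro ⟨y, rfl⟩; exact ⟨F.map f y, ⟨y, rfl⟩, (map_apply_comp f g y).symm⟩
  · rintro ⟨-, ⟨y, rfl⟩, rfl⟩; exact ⟨y, map_apply_comp f g y⟩

theorem iso_subObj (hF : IsDiagramCat C F) {a b : C} (ι : b ⟶ a) (S : Set (F.obj a))
    (h : Set.range (F.map ι) = S) : Nonempty (b ≅ hF.subObj a S) := by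
  obtain ⟨g, -⟩ := hF.unique_sub ι (hF.subIncl a S) (h.trans (hF.range_subIncl a S).symm)
  exact ⟨g⟩

theorem subObj_subObj (hF : IsDiagramCat C F) {a b : C} (ι : b ⟶ a) (R : Set (F.obj b)) :
    Nonempty (hF.subObj b R ≅ hF.subObj a (F.map ι '' R)) := by
  refine iso_subObj hF (hF.subIncl b R ≫ ι) _ ?_
  rw [range_map_comp, hF.range_subIncl]

theorem subObj_univ (hF : IsDiagramCat C F) (a : C) :
    Nonempty (hF.subObj a (Set.univ) ≅ a) := by
  refine (iso_subObj hF (𝟙 a) Set.univ ?_).map Iso.symm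
  rw [F.map_id]
  exact Set.range_id

/-- The single summand of `sFormula`. -/
noncomputable def sTerm (hF : IsDiagramCat C F) (n : ℕ) (a : C) (S : Finset (F.obj a)) :
    AbLe C F n :=
  if h : S.card ≤ n then FreeAbelianGroup.of (hF.subClsLe n a S h) else 0

theorem sFormula_eq_sum (hF : IsDiagramCat C F) (n : ℕ) (a : C) :
    sFormula hF n a = ∑ S : Finset (F.obj a), sTerm hF n a S := rfl

open scoped Classical in
theorem sum_image_range {β γ : Type*} [Fintype β] [Fintype γ] [DecidableEq β] [DecidableEq γ]
    {M : Type*} [AddCommMonoid M] (g : β → γ) (hg : Function.Injective g)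
    (h : Finset γ → M) :
    ∑ S : Finset β, h (S.image g) =
      ∑ T : Finset γ, if ↑T ⊆ Set.range g then h T else 0 := by
  classical
  rw [← Finset.sum_filter]
  have himg : Finset.univ.image (fun S : Finset β => S.image g)
      = Finset.univ.filter (fun T : Finset γ => ↑T ⊆ Set.range g) := by
    ext T
    simp only [Finset.mem_image, Finset.mem_filter, Finset.mem_univ, true_and]
    constructor
    · rintro ⟨S, -, rfl⟩
      rw [Finset.coe_image]
      exact (Set.image_subset_range g ↑S)
    · intro hT
      refine ⟨T.preimage g hg.injOn, ?_⟩
      rw [Finset.image_preimage]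
      exact Finset.filter_true_of_mem (fun x hx => hT hx)
  rw [← himg, Finset.sum_image ?_]
  intro S _ S' _ hSS
  exact Finset.image_injective hg hSS

open scoped Classical in
theorem sTerm_image (hF : IsDiagramCat C F) (n : ℕ) {a b : C} (ι : b ⟶ a)
    (S : Finset (F.obj b)) :
    sTerm hF n a (S.image (F.map ι)) = sTerm hF n b S := by
  classical
  unfold sTerm
  have hcard : (S.image (F.map ι)).card = S.card :=
    Finset.card_image_of_injective S (hF.inj ι)
  by_cases h : S.card ≤ n
  · erw [dif_pos (hcard ▸ h : (S.image (F.map ι)).card ≤ n), dif_pos h]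
    congr 1
    apply Subtype.ext
    show Quot.mk _ _ = Quot.mk _ _
    have hco : ((S.image (F.map ι) : Finset (F.obj a)) : Set (F.obj a))
        = F.map ι '' (S : Set (F.obj b)) := Finset.coe_image
    rw [hco]
    exact Quot.sound ((subObj_subObj hF ι (S : Set (F.obj b))).map Iso.symm)
  · erw [dif_neg (fun hc => h (hcard ▸ hc)), dif_neg h]

open scoped Classical in
theorem sFormula_sub (hF : IsDiagramCat C F) (n : ℕ) {a b : C} (ι : b ⟶ a) :
    sFormula hF n b = ∑ T : Finset (F.obj a),
      if ↑T ⊆ Set.range (F.map ι) then sTerm hF n a T else 0 := by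
  classical
  rw [sFormula_eq_sum]
  rw [← sum_image_range (F.map ι) (hF.inj ι) (sTerm hF n a)]
  exact Finset.sum_congr rfl fun S _ => (sTerm_image hF n ι S).symm

open scoped Classical in
theorem sInvFormula_sub (hF : IsDiagramCat C F) (B : BoxComplex C F) (n : ℕ) {a b : C}
    (ι : b ⟶ a) :
    sInvFormula hF B n b = ∑ T : Finset (F.obj a),
      if ↑T ⊆ Set.range (F.map ι)
      then ((-1 : ℤ) ^ (((Finset.univ.filter (fun x => x ∈ Set.range (F.map ι))) \ T).card))
        • uCls B n (hF.subObj a (T : Set (F.obj a)))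
      else 0 := by
  classical
  set g := (F.map ι : F.obj b → F.obj a) with hg
  have hginj : Function.Injective g := hF.inj ι
  set K := Finset.univ.filter (fun x => x ∈ Set.range g) with hK
  have hKimg : K = Finset.univ.image g := by
    ext x
    simp [hK, Set.mem_range]
  have hKcard : K.card = Fintype.card (F.obj b) := by
    rw [hKimg, Finset.card_image_of_injective _ hginj, Finset.card_univ]
  have step : ∀ S : Finset (F.obj b),
      ((-1 : ℤ) ^ (Sᶜ.card)) •
        mkU B.X n ((B.cells 0).symm (objCell C F (hF.subObj b (S : Set (F.obj b)))))
      = ((-1 : ℤ) ^ ((K \ (S.image g)).card)) •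
        uCls B n (hF.subObj a ((S.image g : Finset (F.obj a)) : Set (F.obj a))) := by
    intro S
    have hTK : S.image g ⊆ K := by
      rw [hKimg]
      exact Finset.image_subset_image (Finset.subset_univ S)
    have hexp : (K \ (S.image g)).card = Sᶜ.card := by
      rw [Finset.card_sdiff_of_subset hTK, hKcard,
        Finset.card_image_of_injective _ hginj, Finset.card_compl]
    rw [hexp]
    have hco : ((S.image g : Finset (F.obj a)) : Set (F.obj a))
        = g '' (S : Set (F.obj b)) := Finset.coe_image
    rw [hco]
    have := uCls_congr B n (subObj_subObj hF ι (S : Set (F.obj b))).some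
    rw [← this]
    rfl
  rw [sInvFormula]
  calc (∑ S : Finset (F.obj b), ((-1 : ℤ) ^ (Sᶜ.card)) •
        mkU B.X n ((B.cells 0).symm (objCell C F (hF.subObj b (S : Set (F.obj b))))))
      = ∑ S : Finset (F.obj b), ((-1 : ℤ) ^ ((K \ (S.image g)).card)) •
        uCls B n (hF.subObj a ((S.image g : Finset (F.obj a)) : Set (F.obj a))) :=
        Finset.sum_congr rfl fun S _ => step S
    _ = _ := by
        rw [sum_image_range g hginj
          (fun T => ((-1 : ℤ) ^ ((K \ T).card)) •
            uCls B n (hF.subObj a (T : Set (F.obj a))))]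

end DiagramLemmas

section CornerLemmas
variable {C : Type} [SmallCategory C] {F : C ⥤ FintypeCat}

/-- Corners of the `(n+1)`-cube: maps from the `0`-cube correspond to vertices. -/
noncomputable def cornerEquiv (n : ℕ) : (cubeObj 0 ⟶ cubeObj (n + 1)) ≃ Cube (n + 1) where
  toFun a := a.1 (fun j => j.elim0)
  invFun s := ⟨fun _ => s, by
    refine ⟨Fin.elim0, s, fun x => x.elim0, fun b i => i.elim0, ?_⟩
    rintro b ⟨c, rfl⟩ i _
    rfl⟩
  left_inv a := by
    apply Subtype.ext
    funext b i
    have hb : b = (fun j => j.elim0) := by funext j; exact j.elim0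
    rw [hb]
  right_inv s := rfl

theorem cubeWeight_cornerEquiv_symm {n : ℕ} (s : Cube (n + 1)) :
    cubeWeight ((cornerEquiv n).symm s) =
      (Finset.univ.filter (fun i => s i = true)).card := rfl

theorem keep_univ {n : ℕ} (pc : PreCell C F (n + 1)) :
    KeepSet pc Fin.elim0 (fun _ => true) = Set.univ := by
  unfold KeepSet
  simp

theorem keep_subset_iff {n : ℕ} (pc : PreCell C F (n + 1)) (s : Cube (n + 1))
    (T : Finset (F.obj pc.q)) :
    ↑T ⊆ KeepSet pc Fin.elim0 s ↔ ∀ ℓ, pc.lab ℓ ∈ T → s ℓ = true := by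
  unfold KeepSet
  constructor
  · intro h ℓ hℓ
    by_contra hs
    exact h hℓ ⟨ℓ, ⟨fun j => j.elim0, Bool.not_eq_true _ ▸ hs⟩, rfl⟩
  · rintro h x hx ⟨ℓ, ⟨-, hs⟩, rfl⟩
    rw [h ℓ hx] at hs
    exact absurd hs (by simp)

theorem corner_action {n : ℕ} (hF : IsDiagramCat C F) (B : BoxComplex C F)
    (pc : PreCell C F (n + 1)) (s : Cube (n + 1)) :
    B.X.map ((cornerEquiv n).symm s).op ((B.cells (n + 1)).symm (Quot.mk _ pc)) =
      (B.cells 0).symm (objCell C F (hF.subObj pc.q (KeepSet pc Fin.elim0 s))) := by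
  have h := B.map_spec ((cornerEquiv n).symm s) Fin.elim0 s
    (by intro x y hxy; exact x.elim0)
    (fun b i => i.elim0)
    (by rintro b ⟨c, rfl⟩ i _; rfl)
    pc
    ⟨hF.subObj pc.q (KeepSet pc Fin.elim0 s), fun i => i.elim0, fun i => i.elim0⟩
    (hF.subIncl pc.q (KeepSet pc Fin.elim0 s))
    (hF.range_subIncl _ _)
    (fun i => i.elim0)
  exact ((B.cells 0).eq_symm_apply).mpr h

theorem rel_zero {n : ℕ} (hF : IsDiagramCat C F) (B : BoxComplex C F)
    (pc : PreCell C F (n + 1)) :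
    ∑ s : Cube (n + 1), ((-1 : ℤ) ^ ((Finset.univ.filter (fun i => s i = true)).card)) •
      uCls B n (hF.subObj pc.q (KeepSet pc Fin.elim0 s)) = 0 := by
  classical
  set c0 := (B.cells (n + 1)).symm (Quot.mk _ pc) with hc0
  have hmem : relationElt B.X n c0 ∈ relSubgroup B.X n :=
    AddSubgroup.subset_closure ⟨c0, rfl⟩
  have h0 : (QuotientAddGroup.mk' (relSubgroup B.X n)) (relationElt B.X n c0) = 0 :=
    (QuotientAddGroup.eq_zero_iff _).mpr hmem
  rw [relationElt, map_sum] at h0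
  simp only [map_zsmul] at h0
  have hcalc : ∑ s : Cube (n + 1), ((-1 : ℤ) ^ ((Finset.univ.filter (fun i => s i = true)).card)) •
        uCls B n (hF.subObj pc.q (KeepSet pc Fin.elim0 s))
      = ∑ f : cubeObj 0 ⟶ cubeObj (n + 1), ((-1 : ℤ) ^ cubeWeight f) •
        (QuotientAddGroup.mk' (relSubgroup B.X n)) (FreeAbelianGroup.of (B.X.map f.op c0)) := by
        refine Fintype.sum_equiv (cornerEquiv n).symm _ _ fun s => ?_
        rw [cubeWeight_cornerEquiv_symm, hc0, corner_action hF B pc s]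
        rfl
  exact hcalc.trans h0

end CornerLemmas

section MainConstruction
variable {C : Type} [SmallCategory C] {F : C ⥤ FintypeCat}

theorem smul_ite' {M : Type*} [AddCommGroup M] (c : ℤ) (p : Prop) [Decidable p] (x : M) :
    c • (if p then x else 0) = if p then c • x else 0 := by
  split_ifs <;> simp

theorem sum_swap_ite {ι κ M : Type*} [Fintype ι] [Fintype κ] [AddCommGroup M]
    (c : ι → κ → ℤ) (P : ι → κ → Prop) [∀ i k, Decidable (P i k)] (y : κ → M) :
    ∑ i : ι, (∑ k : κ, if P i k then c i k • y k else 0)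
      = ∑ k : κ, (∑ i : ι, if P i k then c i k else 0) • y k := by
  rw [Finset.sum_comm]
  refine Finset.sum_congr rfl fun k _ => ?_
  rw [Finset.sum_smul]
  refine Finset.sum_congr rfl fun i _ => ?_
  rw [ite_smul, zero_smul]

theorem range_map_iso {a b : C} (e : a ≅ b) : Set.range (F.map e.hom) = Set.univ := by
  rw [Set.range_eq_univ]
  intro y
  refine ⟨F.map e.inv y, ?_⟩
  rw [← map_apply_comp, e.inv_hom_id, F.map_id]
  rfl

theorem sFormula_iso (hF : IsDiagramCat C F) (n : ℕ) {a b : C} (e : a ≅ b) :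
    sFormula hF n a = sFormula hF n b := by
  classical
  rw [sFormula_sub hF n e.hom, sFormula_eq_sum]
  refine Finset.sum_congr rfl fun T _ => ?_
  rw [if_pos (by rw [range_map_iso e]; exact Set.subset_univ _)]

theorem sInvFormula_iso (hF : IsDiagramCat C F) (B : BoxComplex C F) (n : ℕ) {a b : C}
    (e : a ≅ b) : sInvFormula hF B n a = sInvFormula hF B n b := by
  classical
  rw [sInvFormula_sub hF B n e.hom, sInvFormula]
  refine Finset.sum_congr rfl fun T _ => ?_
  rw [if_pos (by rw [range_map_iso e]; exact Set.subset_univ _)]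
  have h1 : ((Finset.univ.filter (fun x => x ∈ Set.range (F.map e.hom))) \ T).card
      = Tᶜ.card := by
    have h2 : (Finset.univ.filter (fun x => x ∈ Set.range (F.map e.hom))) = Finset.univ := by
      ext x; simp [range_map_iso e]
    rw [h2, ← Finset.compl_eq_univ_sdiff]
  rw [h1]
  rfl

/-- `s` on a `0`-cell. -/
noncomputable def gmap (hF : IsDiagramCat C F) (B : BoxComplex C F) (n : ℕ)
    (x : B.X.obj (op (cubeObj 0))) : AbLe C F n :=
  Quot.liftOn (B.cells 0 x) (fun pc => sFormula hF n pc.q)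
    (fun _ _ h => by obtain ⟨e, -⟩ := h; exact sFormula_iso hF n e)

theorem gmap_objCell (hF : IsDiagramCat C F) (B : BoxComplex C F) (n : ℕ) (a : C) :
    gmap hF B n ((B.cells 0).symm (objCell C F a)) = sFormula hF n a := by
  unfold gmap
  rw [Equiv.apply_symm_apply]
  rfl

/-- `s` on the free abelian group on `0`-cells. -/
noncomputable def sHomF (hF : IsDiagramCat C F) (B : BoxComplex C F) (n : ℕ) :
    FreeAbelianGroup (B.X.obj (op (cubeObj 0))) →+ AbLe C F n :=
  FreeAbelianGroup.lift (gmap hF B n)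

open scoped Classical in
theorem corner_sum_zero (hF : IsDiagramCat C F) (B : BoxComplex C F) (n : ℕ)
    (pc : PreCell C F (n + 1)) :
    ∑ s : Cube (n + 1), ((-1 : ℤ) ^ ((Finset.univ.filter (fun i => s i = true)).card)) •
      sFormula hF n (hF.subObj pc.q (KeepSet pc Fin.elim0 s)) = 0 := by
  classical
  have hsub : ∀ s : Cube (n + 1), sFormula hF n (hF.subObj pc.q (KeepSet pc Fin.elim0 s))
      = ∑ T : Finset (F.obj pc.q),
        if (∀ ℓ, pc.lab ℓ ∈ T → s ℓ = true) then sTerm hF n pc.q T else 0 := by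
    intro s
    rw [sFormula_sub hF n (hF.subIncl pc.q (KeepSet pc Fin.elim0 s))]
    refine Finset.sum_congr rfl fun T _ => ?_
    refine if_congr ?_ rfl rfl
    rw [hF.range_subIncl]
    exact keep_subset_iff pc s T
  simp only [hsub]
  simp only [Finset.smul_sum, smul_ite']
  rw [Finset.sum_comm]
  refine Finset.sum_eq_zero fun T _ => ?_
  by_cases hT : ∀ ℓ, pc.lab ℓ ∈ T
  · -- the coefficient may be nonzero, but the term is zero
    have hcard : ¬ T.card ≤ n := by
      have h1 : Finset.univ.image pc.lab ⊆ T := by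
        intro x hx
        obtain ⟨ℓ, -, rfl⟩ := Finset.mem_image.mp hx
        exact hT ℓ
      have h2 : (Finset.univ.image pc.lab).card = n + 1 := by
        rw [Finset.card_image_of_injective _ pc.inj, Finset.card_univ, Fintype.card_fin]
      have := Finset.card_le_card h1
      omega
    have hzero : sTerm hF n pc.q T = 0 := dif_neg hcard
    refine Finset.sum_eq_zero fun s _ => ?_
    rw [hzero, smul_zero, ite_self]
  · -- the coefficient is zero
    have hstep : ∀ s : Cube (n + 1),
        (if (∀ ℓ, pc.lab ℓ ∈ T → s ℓ = true)
          then ((-1 : ℤ) ^ ((Finset.univ.filter (fun i => s i = true)).card)) •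
            sTerm hF n pc.q T else 0)
        = (if (∀ ℓ, pc.lab ℓ ∈ T → s ℓ = true)
          then ((-1 : ℤ) ^ ((Finset.univ.filter (fun i => s i = true)).card)) else 0) •
            sTerm hF n pc.q T := by
      intro s; split_ifs <;> simp
    simp only [hstep]
    rw [← Finset.sum_smul]
    have hcoef : (∑ s : Cube (n + 1),
        if (∀ ℓ, pc.lab ℓ ∈ T → s ℓ = true)
        then ((-1 : ℤ) ^ ((Finset.univ.filter (fun i => s i = true)).card)) else 0) = 0 := by
      have hLne : Finset.univ.filter (fun ℓ => pc.lab ℓ ∈ T) ≠ Finset.univ := by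
        intro hL
        apply hT
        intro ℓ
        have hm : ℓ ∈ Finset.univ.filter (fun ℓ => pc.lab ℓ ∈ T) := by
          rw [hL]; exact Finset.mem_univ ℓ
        exact (Finset.mem_filter.mp hm).2
      have hb := sum_bool_sign (α := Fin (n + 1)) (Finset.univ.filter (fun ℓ => pc.lab ℓ ∈ T))
      rw [if_neg hLne] at hb
      refine Eq.trans ?_ hb
      refine Finset.sum_congr rfl fun s _ => ?_
      have hiff : (∀ ℓ, pc.lab ℓ ∈ T → s ℓ = true)
          ↔ (∀ ℓ ∈ Finset.univ.filter (fun ℓ => pc.lab ℓ ∈ T), s ℓ = true) := by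
        constructor
        · intro h ℓ hℓ; exact h ℓ ((Finset.mem_filter.mp hℓ).2)
        · intro h ℓ hℓ; exact h ℓ (Finset.mem_filter.mpr ⟨Finset.mem_univ ℓ, hℓ⟩)
      simp only [hiff]
      congr
    rw [hcoef, zero_smul]

theorem sHomF_rel (hF : IsDiagramCat C F) (B : BoxComplex C F) (n : ℕ)
    (c : B.X.obj (op (cubeObj (n + 1)))) :
    sHomF hF B n (relationElt B.X n c) = 0 := by
  classical
  obtain ⟨pc, hpc⟩ := Quot.exists_rep (B.cells (n + 1) c)
  have hc : c = (B.cells (n + 1)).symm (Quot.mk _ pc) := by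
    rw [hpc, Equiv.symm_apply_apply]
  rw [relationElt, map_sum]
  simp only [map_zsmul]
  have := Fintype.sum_equiv (cornerEquiv n).symm
    (fun s : Cube (n + 1) => ((-1 : ℤ) ^ ((Finset.univ.filter (fun i => s i = true)).card)) •
      sFormula hF n (hF.subObj pc.q (KeepSet pc Fin.elim0 s)))
    (fun f : cubeObj 0 ⟶ cubeObj (n + 1) => ((-1 : ℤ) ^ cubeWeight f) •
      sHomF hF B n (FreeAbelianGroup.of (B.X.map f.op c)))
    (fun s => by
      dsimp only
      rw [cubeWeight_cornerEquiv_symm, hc, corner_action hF B pc s]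
      congr 1
      show _ = sHomF hF B n (FreeAbelianGroup.of _)
      rw [show sHomF hF B n (FreeAbelianGroup.of ((B.cells 0).symm (objCell C F
          (hF.subObj pc.q (KeepSet pc Fin.elim0 s))))) = gmap hF B n ((B.cells 0).symm
          (objCell C F (hF.subObj pc.q (KeepSet pc Fin.elim0 s)))) from
        FreeAbelianGroup.lift_apply_of _ _]
      rw [gmap_objCell])
  rw [← this]
  exact corner_sum_zero hF B n pc

theorem sHomF_ker (hF : IsDiagramCat C F) (B : BoxComplex C F) (n : ℕ) :
    ∀ x ∈ relSubgroup B.X n, sHomF hF B n x = 0 := by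
  intro x hx
  have hle : relSubgroup B.X n ≤ (sHomF hF B n).ker := by
    rw [relSubgroup]
    rw [AddSubgroup.closure_le]
    rintro - ⟨c, rfl⟩
    exact sHomF_rel hF B n c
  exact hle hx

/-- The well-defined homomorphism `s : Uₙ(D^□) → Ab(D_{≤n})`. -/
noncomputable def sBarHom (hF : IsDiagramCat C F) (B : BoxComplex C F) (n : ℕ) :
    UGroup B.X n →+ AbLe C F n :=
  QuotientAddGroup.lift (relSubgroup B.X n) (sHomF hF B n) (sHomF_ker hF B n)

theorem sBarHom_mkU (hF : IsDiagramCat C F) (B : BoxComplex C F) (n : ℕ)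
    (x : B.X.obj (op (cubeObj 0))) :
    sBarHom hF B n (mkU B.X n x) = gmap hF B n x := by
  show sHomF hF B n (FreeAbelianGroup.of x) = _
  exact FreeAbelianGroup.lift_apply_of _ _

theorem sBarHom_uCls (hF : IsDiagramCat C F) (B : BoxComplex C F) (n : ℕ) (a : C) :
    sBarHom hF B n (uCls B n a) = sFormula hF n a := by
  rw [uCls, sBarHom_mkU, gmap_objCell]

/-- The homomorphism `s₋ : Ab(D_{≤n}) → Uₙ(D^□)`. -/
noncomputable def sInvHom (hF : IsDiagramCat C F) (B : BoxComplex C F) (n : ℕ) :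
    AbLe C F n →+ UGroup B.X n :=
  FreeAbelianGroup.lift (fun p : {c : ObjClass C // orderC C F c ≤ n} =>
    Quot.liftOn p.1 (fun a => sInvFormula hF B n a)
      (fun _ _ h => sInvFormula_iso hF B n h.some))

theorem sInvHom_of (hF : IsDiagramCat C F) (B : BoxComplex C F) (n : ℕ) (a : C)
    (h : orderC C F (Quot.mk _ a) ≤ n) :
    sInvHom hF B n (FreeAbelianGroup.of ⟨Quot.mk _ a, h⟩) = sInvFormula hF B n a :=
  FreeAbelianGroup.lift_apply_of _ _

end MainConstruction

section FinalLayer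
variable {C : Type} [SmallCategory C] {F : C ⥤ FintypeCat}

open scoped Classical in
theorem sInvFormula_subObj (hF : IsDiagramCat C F) (B : BoxComplex C F) (n : ℕ) (a : C)
    (S : Finset (F.obj a)) :
    sInvFormula hF B n (hF.subObj a (S : Set (F.obj a)))
      = ∑ T : Finset (F.obj a), if T ⊆ S
          then ((-1 : ℤ) ^ ((S \ T).card)) • uCls B n (hF.subObj a (T : Set (F.obj a)))
          else 0 := by
  classical
  rw [sInvFormula_sub hF B n (hF.subIncl a (S : Set (F.obj a)))]
  have hr : Set.range (F.map (hF.subIncl a (S : Set (F.obj a)))) = (S : Set (F.obj a)) :=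
    hF.range_subIncl _ _
  have hfil : Finset.univ.filter (fun x => x ∈ (S : Set (F.obj a))) = S := by
    ext x; simp
  simp only [hr, hfil, Finset.coe_subset]

open scoped Classical in
theorem sFormula_subObj (hF : IsDiagramCat C F) (n : ℕ) (a : C) (S : Finset (F.obj a)) :
    sFormula hF n (hF.subObj a (S : Set (F.obj a)))
      = ∑ T : Finset (F.obj a), if T ⊆ S then sTerm hF n a T else 0 := by
  classical
  rw [sFormula_sub hF n (hF.subIncl a (S : Set (F.obj a)))]
  have hr : Set.range (F.map (hF.subIncl a (S : Set (F.obj a)))) = (S : Set (F.obj a)) :=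
    hF.range_subIncl _ _
  simp only [hr, Finset.coe_subset]

theorem uCls_subObj_univ (hF : IsDiagramCat C F) (B : BoxComplex C F) (n : ℕ) (a : C) :
    uCls B n (hF.subObj a ((Finset.univ : Finset (F.obj a)) : Set (F.obj a))) = uCls B n a := by
  have h : ((Finset.univ : Finset (F.obj a)) : Set (F.obj a)) = Set.univ := Finset.coe_univ
  rw [h]
  exact uCls_congr B n (subObj_univ hF a).some

theorem sInv_sFormula (hF : IsDiagramCat C F) (B : BoxComplex C F) (n : ℕ) (a : C)
    (h : Fintype.card (F.obj a) ≤ n) :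
    sInvHom hF B n (sFormula hF n a) = uCls B n a := by
  classical
  rw [sFormula_eq_sum, map_sum]
  have hterm : ∀ S : Finset (F.obj a), sInvHom hF B n (sTerm hF n a S)
      = sInvFormula hF B n (hF.subObj a (S : Set (F.obj a))) := by
    intro S
    have hS : S.card ≤ n := le_trans (le_trans (Finset.card_le_univ S)
      (le_of_eq Finset.card_univ)) h
    erw [sTerm, dif_pos hS]
    exact FreeAbelianGroup.lift_apply_of _ _
  simp only [hterm, sInvFormula_subObj hF B n a]
  rw [Finset.sum_comm]
  have hswap : ∀ T : Finset (F.obj a),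
      (∑ S : Finset (F.obj a), if T ⊆ S
        then ((-1 : ℤ) ^ ((S \ T).card)) • uCls B n (hF.subObj a (T : Set (F.obj a)))
        else 0)
      = (if T = Finset.univ then (1 : ℤ) else 0) •
          uCls B n (hF.subObj a (T : Set (F.obj a))) := by
    intro T
    have hstep : ∀ S : Finset (F.obj a),
        (if T ⊆ S then ((-1 : ℤ) ^ ((S \ T).card)) •
          uCls B n (hF.subObj a (T : Set (F.obj a))) else 0)
        = (if T ⊆ S then ((-1 : ℤ) ^ ((S \ T).card)) else 0) •
          uCls B n (hF.subObj a (T : Set (F.obj a))) := by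
      intro S; split_ifs <;> simp
    simp only [hstep]
    rw [← Finset.sum_smul, sum_sdiff_sign T]
  simp only [hswap]
  have hred : ∀ T : Finset (F.obj a),
      (if T = Finset.univ then (1 : ℤ) else 0) •
        uCls B n (hF.subObj a (T : Set (F.obj a)))
      = (if T = Finset.univ then uCls B n (hF.subObj a (T : Set (F.obj a))) else 0) := by
    intro T; split_ifs <;> simp
  simp only [hred]
  rw [Fintype.sum_ite_eq' (Finset.univ : Finset (F.obj a))
    (fun T => uCls B n (hF.subObj a (T : Set (F.obj a))))]
  exact uCls_subObj_univ hF B n a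

theorem phi_fix (hF : IsDiagramCat C F) (B : BoxComplex C F) (n : ℕ) :
    ∀ (k : ℕ) (a : C), Fintype.card (F.obj a) ≤ k →
      sInvHom hF B n (sBarHom hF B n (uCls B n a)) = uCls B n a := by
  intro k
  induction k with
  | zero =>
    intro a ha
    rw [sBarHom_uCls]
    exact sInv_sFormula hF B n a (le_trans ha (Nat.zero_le n))
  | succ k ih =>
    intro a ha
    by_cases hn : Fintype.card (F.obj a) ≤ n
    · rw [sBarHom_uCls]
      exact sInv_sFormula hF B n a hn
    · obtain ⟨emb⟩ : Nonempty (Fin (n + 1) ↪ F.obj a) :=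
        Function.Embedding.nonempty_of_card_le
          (by simpa using Nat.succ_le_of_lt (lt_of_not_ge hn))
      classical
      set pc : PreCell C F (n + 1) := ⟨a, emb, emb.injective⟩ with hpcdef
      set Φ : UGroup B.X n →+ UGroup B.X n :=
        (sInvHom hF B n).comp (sBarHom hF B n) with hPhi
      set D : Cube (n + 1) → UGroup B.X n := fun s =>
        Φ (uCls B n (hF.subObj pc.q (KeepSet pc Fin.elim0 s)))
          - uCls B n (hF.subObj pc.q (KeepSet pc Fin.elim0 s)) with hD
      have hrel := rel_zero hF B pc
      have h0 : ∑ s : Cube (n + 1),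
          ((-1 : ℤ) ^ ((Finset.univ.filter (fun i => s i = true)).card)) • D s = 0 := by
        have h1 := congrArg Φ hrel
        rw [map_sum, map_zero] at h1
        simp only [map_zsmul] at h1
        have h2 : (∑ s : Cube (n + 1),
            ((-1 : ℤ) ^ ((Finset.univ.filter (fun i => s i = true)).card)) • D s)
          = (∑ s : Cube (n + 1),
              ((-1 : ℤ) ^ ((Finset.univ.filter (fun i => s i = true)).card)) •
                Φ (uCls B n (hF.subObj pc.q (KeepSet pc Fin.elim0 s))))
            - (∑ s : Cube (n + 1),
              ((-1 : ℤ) ^ ((Finset.univ.filter (fun i => s i = true)).card)) •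
                uCls B n (hF.subObj pc.q (KeepSet pc Fin.elim0 s))) := by
          rw [← Finset.sum_sub_distrib]
          exact Finset.sum_congr rfl fun s _ => smul_sub _ _ _
        rw [h2, h1, hrel, sub_zero]
      have hvanish : ∀ s : Cube (n + 1), s ≠ (fun _ => true) → D s = 0 := by
        intro s hs
        obtain ⟨ℓ₀, hℓ₀⟩ : ∃ ℓ, s ℓ = false := by
          by_contra hall
          push_neg at hall
          apply hs
          funext ℓ
          cases hsl : s ℓ with
          | false => exact absurd hsl (hall ℓ)
          | true => rfl
        have hnotmem : pc.lab ℓ₀ ∉ KeepSet pc Fin.elim0 s := by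
          intro hmem
          exact hmem ⟨ℓ₀, ⟨fun j => j.elim0, hℓ₀⟩, rfl⟩
        have hcard : Fintype.card (F.obj (hF.subObj pc.q (KeepSet pc Fin.elim0 s)))
            < Fintype.card (F.obj pc.q) := by
          refine Fintype.card_lt_of_injective_of_notMem
            (F.map (hF.subIncl pc.q (KeepSet pc Fin.elim0 s))) (hF.inj _) (b := pc.lab ℓ₀) ?_
          rw [hF.range_subIncl]
          exact hnotmem
        have hle : Fintype.card (F.obj (hF.subObj pc.q (KeepSet pc Fin.elim0 s))) ≤ k := by
          have hq : Fintype.card (F.obj pc.q) = Fintype.card (F.obj a) := rfl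
          omega
        rw [hD]
        dsimp only
        rw [sub_eq_zero]
        exact ih _ hle
      have hsingle : (∑ s : Cube (n + 1),
          ((-1 : ℤ) ^ ((Finset.univ.filter (fun i => s i = true)).card)) • D s)
          = ((-1 : ℤ) ^ (n + 1)) • D (fun _ => true) := by
        rw [Finset.sum_eq_single (fun _ => true : Cube (n + 1))
          (fun b _ hb => by rw [hvanish b hb, smul_zero])
          (fun hmem => absurd (Finset.mem_univ _) hmem)]
        congr 1
        have : (Finset.univ.filter (fun i : Fin (n + 1) => (true : Bool) = true))
            = Finset.univ := by simp
        rw [this, Finset.card_univ, Fintype.card_fin]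
      have hDa : D (fun _ => true) = Φ (uCls B n a) - uCls B n a := by
        rw [hD]
        dsimp only
        rw [keep_univ pc, uCls_congr B n (subObj_univ hF pc.q).some]
      rw [hsingle, hDa] at h0
      have h3 := congrArg (fun z => ((-1 : ℤ) ^ (n + 1)) • z) h0
      simp only [smul_smul, smul_zero] at h3
      rw [show ((-1 : ℤ) ^ (n + 1) * (-1 : ℤ) ^ (n + 1)) = 1 by
        rw [← mul_pow]; norm_num, one_smul] at h3
      have h4 := sub_eq_zero.mp h3
      exact h4

theorem sBar_sInvFormula (hF : IsDiagramCat C F) (B : BoxComplex C F) (n : ℕ) (a : C)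
    (h : Fintype.card (F.obj a) ≤ n) :
    sBarHom hF B n (sInvFormula hF B n a)
      = FreeAbelianGroup.of (⟨Quot.mk _ a, h⟩ : {c : ObjClass C // orderC C F c ≤ n}) := by
  classical
  rw [sInvFormula, map_sum]
  simp only [map_zsmul]
  have h1 : ∀ S : Finset (F.obj a),
      sBarHom hF B n (mkU B.X n ((B.cells 0).symm (objCell C F
        (hF.subObj a (S : Set (F.obj a))))))
      = sFormula hF n (hF.subObj a (S : Set (F.obj a))) := by
    intro S
    rw [sBarHom_mkU, gmap_objCell]
  simp only [h1, sFormula_subObj hF n a]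
  simp only [Finset.smul_sum, smul_ite']
  rw [Finset.sum_comm]
  have hswap : ∀ T : Finset (F.obj a),
      (∑ S : Finset (F.obj a), if T ⊆ S
        then ((-1 : ℤ) ^ (Sᶜ.card)) • sTerm hF n a T else 0)
      = (if T = Finset.univ then (1 : ℤ) else 0) • sTerm hF n a T := by
    intro T
    have hstep : ∀ S : Finset (F.obj a),
        (if T ⊆ S then ((-1 : ℤ) ^ (Sᶜ.card)) • sTerm hF n a T else 0)
        = (if T ⊆ S then ((-1 : ℤ) ^ (Sᶜ.card)) else 0) • sTerm hF n a T := by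
      intro S; split_ifs <;> simp
    simp only [hstep]
    rw [← Finset.sum_smul, sum_compl_sign T]
  simp only [hswap]
  have hred : ∀ T : Finset (F.obj a),
      (if T = Finset.univ then (1 : ℤ) else 0) • sTerm hF n a T
      = (if T = Finset.univ then sTerm hF n a T else 0) := by
    intro T; split_ifs <;> simp
  simp only [hred]
  rw [Fintype.sum_ite_eq' (Finset.univ : Finset (F.obj a)) (fun T => sTerm hF n a T)]
  have hcard : (Finset.univ : Finset (F.obj a)).card ≤ n := by
    rw [Finset.card_univ]; exact h
  erw [sTerm, dif_pos hcard]
  congr 1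
  apply Subtype.ext
  show Quot.mk _ _ = Quot.mk _ _
  have hco : ((Finset.univ : Finset (F.obj a)) : Set (F.obj a)) = Set.univ := Finset.coe_univ
  rw [hco]
  exact Quot.sound (subObj_univ hF a)

end FinalLayer

/-- **Goussarov's theorem.** For a diagram category `D = (C, F)` and a
realization `B` of `D^□`, the map `s : Uₙ(D^□) → Ab(D_{≤n})` given on generators (0-cells,
i.e. isomorphism classes of objects) by `s(a) = ∑_{S ⊆ F(a), |S| ≤ n} a_S` is a well-defined
group homomorphism and an isomorphism of abelian groups, whose inverse is given on generators
by `s₋(a) = ∑_{S ⊆ F(a)} (-1)^{|F(a) ∖ S|} a_S`. -/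
theorem goussarov (C : Type) [SmallCategory C] (F : C ⥤ FintypeCat)
    (hF : IsDiagramCat C F) (B : BoxComplex C F) (n : ℕ) :
    ∃ s : UGroup B.X n ≃+ AbLe C F n,
      (∀ a : C, s (mkU B.X n ((B.cells 0).symm (objCell C F a))) = sFormula hF n a) ∧
      (∀ (a : C) (h : Fintype.card (F.obj a) ≤ n),
        s.symm (FreeAbelianGroup.of ⟨Quot.mk _ a, h⟩) = sInvFormula hF B n a) := by
  classical
  have hof : ∀ x : B.X.obj (op (cubeObj 0)),
      sInvHom hF B n (sBarHom hF B n (mkU B.X n x)) = mkU B.X n x := by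
    intro x
    obtain ⟨pc, hpc⟩ := Quot.exists_rep (B.cells 0 x)
    have hx : x = (B.cells 0).symm (objCell C F pc.q) := by
      rw [show objCell C F pc.q = Quot.mk _ pc from
        Quot.sound ⟨Iso.refl _, fun i => i.elim0⟩, hpc, Equiv.symm_apply_apply]
    rw [hx]
    exact phi_fix hF B n (Fintype.card (F.obj pc.q)) pc.q le_rfl
  have hleft : ∀ u : UGroup B.X n, sInvHom hF B n (sBarHom hF B n u) = u := by
    intro u
    refine QuotientAddGroup.induction_on u ?_
    intro z
    refine FreeAbelianGroup.induction_on z ?_ ?_ ?_ ?_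
    · show sInvHom hF B n (sBarHom hF B n 0) = 0
      simp
    · intro x
      exact hof x
    · intro x _
      have h1 : (QuotientAddGroup.mk (-FreeAbelianGroup.of x) : UGroup B.X n)
          = -(mkU B.X n x) := rfl
      show sInvHom hF B n (sBarHom hF B n
        (QuotientAddGroup.mk (-FreeAbelianGroup.of x))) = _
      rw [h1, map_neg, map_neg, hof x]
    · intro y z hy hz
      have h1 : (QuotientAddGroup.mk (y + z) : UGroup B.X n)
          = QuotientAddGroup.mk y + QuotientAddGroup.mk z := rfl
      show sInvHom hF B n (sBarHom hF B n (QuotientAddGroup.mk (y + z))) = _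
      erw [h1, map_add, map_add, hy, hz]; exact rfl
  have hrof : ∀ p : {c : ObjClass C // orderC C F c ≤ n},
      sBarHom hF B n (sInvHom hF B n (FreeAbelianGroup.of p)) = FreeAbelianGroup.of p := by
    rintro ⟨c, hc⟩
    obtain ⟨a, rfl⟩ := Quot.exists_rep c
    rw [sInvHom_of hF B n a hc, sBar_sInvFormula hF B n a hc]
  have hright : ∀ y : AbLe C F n, sBarHom hF B n (sInvHom hF B n y) = y := by
    intro y
    refine FreeAbelianGroup.induction_on y (by exact (congrArg _ (map_zero _)).trans (map_zero _)) (fun p => hrof p)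
      (fun p _ => by erw [map_neg, map_neg, hrof p]; exact rfl) (fun w z hw hz => by
        erw [map_add, map_add, hw, hz]; exact rfl)
  refine ⟨AddEquiv.mk' (Equiv.mk (sBarHom hF B n) (sInvHom hF B n) hleft hright)
    (fun x y => (sBarHom hF B n).map_add x y), ?_, ?_⟩
  · intro a
    show sBarHom hF B n (uCls B n a) = _
    exact sBarHom_uCls hF B n a
  · intro a h
    exact sInvHom_of hF B n a h
end

section
/- Let M be a monoid with generating set S, and let Y be the cubical complex of the generating set: Y_n is the set of functions C_n → M of the form b ↦ x_0 y_1^{b(σ(1))} x_1 y_2^{b(σ(2))} x_2 ⋯ y_n^{b(σ(n))} x_n with x_0,…,x_n ∈ M, y_1,…,y_n ∈ S, and σ a permutation of [n], and for a cube map a : C_n → C_m and f ∈ Y_m, Y(a^op)(f) = f ∘ a. Then for every n ≥ 0, U_n(Y) is isomorphic as an abelian group to ℤ[M] / J^{n+1}, where ℤ[M] is the monoid ring of M over ℤ and J is the two-sided ideal of ℤ[M] generated by the elements 1 − y for y ∈ S. -/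
open CategoryTheory Opposite

open CategoryTheory Opposite

/-- The `(n)`-th power of a two-sided ideal: `I⁰ = ⊤` and `I^{k+1}` is the two-sided ideal
spanned by products of an element of `I` with an element of `I^k`. -/
def tsiPow {R : Type} [Ring R] (I : TwoSidedIdeal R) : ℕ → TwoSidedIdeal R
  | 0 => ⊤
  | k + 1 => TwoSidedIdeal.span {x : R | ∃ a ∈ I, ∃ b ∈ tsiPow I k, x = a * b}

/-- The two-sided ideal `J ⊆ ℤ[M]` generated by the elements `1 - y` for `y ∈ S`. -/
noncomputable def Jideal (M : Type) [Monoid M] (S : Set M) : TwoSidedIdeal (MonoidAlgebra ℤ M) :=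
  TwoSidedIdeal.span {x : MonoidAlgebra ℤ M | ∃ y ∈ S, x = 1 - MonoidAlgebra.of ℤ M y}

/-- The quotient ring `ℤ[M]/J^{n+1}`. -/
def JQuot (M : Type) [Monoid M] (S : Set M) (n : ℕ) : Type :=
  ((tsiPow (Jideal M S) (n + 1)).ringCon).Quotient

noncomputable instance (M : Type) [Monoid M] (S : Set M) (n : ℕ) : Ring (JQuot M S n) := by
  unfold JQuot; infer_instance

/-- The quotient map `ℤ[M] → ℤ[M]/J^{n+1}`. -/
noncomputable def JQuotMk (M : Type) [Monoid M] (S : Set M) (n : ℕ) :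
    MonoidAlgebra ℤ M →+* JQuot M S n :=
  RingCon.mk' _

/-- The condition that `φ : Cₙ → M` has the word form
`b ↦ x₀ y₁^{b(σ(1))} x₁ y₂^{b(σ(2))} ⋯ yₙ^{b(σ(n))} xₙ` with the `yᵢ` in the generating set
`S` and `σ` a permutation of `[n]`. -/
def IsWordForm (M : Type) [Monoid M] (S : Set M) (n : ℕ) (φ : Cube n → M) : Prop :=
  ∃ (x : Fin (n + 1) → M) (y : Fin n → M) (σ : Equiv.Perm (Fin n)),
    (∀ i, y i ∈ S) ∧
    ∀ b : Cube n,
      φ b = x 0 * (List.ofFn (fun i : Fin n => (if b (σ i) then y i else 1) * x i.succ)).prod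

/-- The `n`-cells of the cubical complex of a generating set. -/
def WordForm (M : Type) [Monoid M] (S : Set M) (n : ℕ) :=
  {φ : Cube n → M // IsWordForm M S n φ}

/-! ### Auxiliary material for the proof -/

namespace MCFT

/-- Number of `true` coordinates of a boolean vector. -/
def cnt {k : ℕ} (b : Fin k → Bool) : ℕ := ∑ i, if b i then 1 else 0

lemma cnt_cons {k : ℕ} (t : Bool) (c : Fin k → Bool) :
    cnt (Fin.cons t c) = (if t then 1 else 0) + cnt c := by
  unfold cnt
  rw [Fin.sum_univ_succ]
  simp only [Fin.cons_zero, Fin.cons_succ]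

lemma cnt_comp_perm {k : ℕ} (σ : Equiv.Perm (Fin k)) (c : Fin k → Bool) :
    cnt (fun i => c (σ i)) = cnt c :=
  Equiv.sum_comp σ (fun j => if c j then 1 else 0)

section Expand

variable {R : Type*} [Ring R]

lemma expand_aux : ∀ (k : ℕ) (z : R) (u w : Fin k → R),
    ∑ b : Fin k → Bool, ((-1 : ℤ) ^ cnt b) •
      (z * (List.ofFn fun i => (if b i then u i else 1) * w i).prod) =
    z * (List.ofFn fun i => (1 - u i) * w i).prod := by
  intro k
  induction k with
  | zero =>
    intro z u w
    rw [Fintype.sum_unique]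
    simp [cnt]
  | succ k ih =>
    intro z u w
    rw [← Equiv.sum_comp (Fin.consEquiv fun _ : Fin (k + 1) => Bool), Fintype.sum_prod_type]
    have hrow : ∀ t : Bool,
        (∑ c : Fin k → Bool,
          ((-1 : ℤ) ^ cnt ((Fin.consEquiv fun _ : Fin (k + 1) => Bool) (t, c))) •
            (z * (List.ofFn fun i =>
              (if (Fin.consEquiv fun _ : Fin (k + 1) => Bool) (t, c) i then u i else 1)
                * w i).prod)) =
        ((-1 : ℤ) ^ (if t then 1 else 0)) •
          ((z * ((if t then u 0 else 1) * w 0)) *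
            (List.ofFn fun i : Fin k => (1 - u i.succ) * w i.succ).prod) := by
      intro t
      have hce : ∀ c : Fin k → Bool,
          (Fin.consEquiv fun _ : Fin (k + 1) => Bool) (t, c) = Fin.cons t c := fun _ => rfl
      simp only [hce]
      rw [← ih (z * ((if t then u 0 else 1) * w 0)) (fun i => u i.succ) (fun i => w i.succ),
        Finset.smul_sum]
      refine Finset.sum_congr rfl fun c _ => ?_
      rw [cnt_cons, pow_add, mul_smul]
      congr 1
      congr 1
      rw [List.ofFn_succ, List.prod_cons]
      simp only [Fin.cons_zero, Fin.cons_succ, mul_assoc]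
    rw [Finset.sum_congr rfl fun t _ => hrow t, Fintype.sum_bool,
      List.ofFn_succ, List.prod_cons]
    simp only [if_true, if_false, pow_one, pow_zero, one_smul, neg_smul, one_mul,
      mul_assoc, sub_mul, mul_sub]
    norm_num
    rw [neg_add_eq_sub]

end Expand

open MonoidAlgebra

variable {M : Type} [Monoid M]

/-- The set of products `x₀(1-y₁)x₁⋯(1-y_k)x_k` in `ℤ[M]`. -/
def Tset (S : Set M) (k : ℕ) : Set (MonoidAlgebra ℤ M) :=
  {r | ∃ (x : Fin (k + 1) → M) (y : Fin k → M), (∀ i, y i ∈ S) ∧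
    r = MonoidAlgebra.of ℤ M (x 0) *
      (List.ofFn fun i : Fin k =>
        (1 - MonoidAlgebra.of ℤ M (y i)) * MonoidAlgebra.of ℤ M (x i.succ)).prod}

lemma of_mem_Tset0 (S : Set M) (m : M) : MonoidAlgebra.of ℤ M m ∈ Tset S 0 :=
  ⟨fun _ => m, Fin.elim0, fun i => i.elim0, by simp⟩

lemma closure_range_of :
    AddSubgroup.closure (Set.range (MonoidAlgebra.of ℤ M)) = ⊤ := by
  rw [eq_top_iff]
  rintro x -
  induction x using MonoidAlgebra.induction_on with
  | of g => exact AddSubgroup.subset_closure ⟨g, rfl⟩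
  | add f g hf hg => exact add_mem hf hg
  | smul r f hf => exact AddSubgroup.zsmul_mem _ hf r

lemma closure_T0 (S : Set M) : AddSubgroup.closure (Tset S 0) = ⊤ := by
  rw [eq_top_iff, ← closure_range_of]
  exact AddSubgroup.closure_mono (by rintro _ ⟨m, rfl⟩; exact of_mem_Tset0 S m)

lemma of_mul_mem_Tset {S : Set M} {k : ℕ} (m : M) {t : MonoidAlgebra ℤ M}
    (ht : t ∈ Tset S k) : MonoidAlgebra.of ℤ M m * t ∈ Tset S k := by
  obtain ⟨x, y, hy, rfl⟩ := ht
  refine ⟨Fin.cons (m * x 0) (fun i => x i.succ), y, hy, ?_⟩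
  simp only [Fin.cons_zero, Fin.cons_succ, map_mul, mul_assoc]

lemma mul_mem_closure_Tset {S : Set M} {k : ℕ} (r : MonoidAlgebra ℤ M)
    {x : MonoidAlgebra ℤ M} (hx : x ∈ AddSubgroup.closure (Tset S k)) :
    r * x ∈ AddSubgroup.closure (Tset S k) := by
  have key : ∀ t ∈ Tset S k, ∀ r : MonoidAlgebra ℤ M,
      r * t ∈ AddSubgroup.closure (Tset S k) := by
    intro t ht r
    have h1 : AddSubgroup.closure (Set.range (MonoidAlgebra.of ℤ M)) ≤
        AddSubgroup.comap (AddMonoidHom.mulRight t) (AddSubgroup.closure (Tset S k)) := by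
      rw [AddSubgroup.closure_le]
      rintro _ ⟨m, rfl⟩
      exact AddSubgroup.subset_closure (of_mul_mem_Tset m ht)
    have h2 : r ∈ AddSubgroup.comap (AddMonoidHom.mulRight t)
        (AddSubgroup.closure (Tset S k)) := h1 (by rw [closure_range_of]; trivial)
    simpa using h2
  refine AddSubgroup.closure_induction (fun t ht => key t ht r) ?_ ?_ ?_ hx
  · rw [mul_zero]; exact zero_mem _
  · intro a b _ _ ha hb; rw [mul_add]; exact add_mem ha hb
  · intro a _ ha; rw [mul_neg]; exact neg_mem ha

lemma Jgen_mul_mem {S : Set M} {k : ℕ} (x0 : M) {y : M} (hy : y ∈ S)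
    {b : MonoidAlgebra ℤ M} (hb : b ∈ AddSubgroup.closure (Tset S k)) :
    (MonoidAlgebra.of ℤ M x0 * (1 - MonoidAlgebra.of ℤ M y)) * b ∈
      AddSubgroup.closure (Tset S (k + 1)) := by
  refine AddSubgroup.closure_induction ?_ ?_ ?_ ?_ hb
  · rintro t ⟨x, y', hy', rfl⟩
    refine AddSubgroup.subset_closure ⟨Fin.cons x0 x, Fin.cons y y', ?_, ?_⟩
    · intro i
      refine Fin.cases ?_ (fun j => ?_) i
      · simpa using hy
      · simpa using hy' j
    · simp [List.ofFn_succ, Fin.cons_zero, Fin.cons_succ, mul_assoc]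
  · rw [mul_zero]; exact zero_mem _
  · intro a c _ _ ha hc; rw [mul_add]; exact add_mem ha hc
  · intro a _ ha; rw [mul_neg]; exact neg_mem ha

lemma Tsucc_decomp {S : Set M} {k : ℕ} {t : MonoidAlgebra ℤ M} (ht : t ∈ Tset S (k + 1)) :
    ∃ (x0 : M) (y : M), y ∈ S ∧ ∃ b ∈ Tset S k,
      t = (MonoidAlgebra.of ℤ M x0 * (1 - MonoidAlgebra.of ℤ M y)) * b := by
  obtain ⟨x, y, hy, rfl⟩ := ht
  refine ⟨x 0, y 0, hy 0, _,
    ⟨fun i => x i.succ, fun i => y i.succ, fun i => hy i.succ, rfl⟩, ?_⟩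
  simp [List.ofFn_succ, mul_assoc]

lemma closure_Tset_mul_mem {S : Set M} : ∀ (k : ℕ) (r : MonoidAlgebra ℤ M)
    {x : MonoidAlgebra ℤ M}, x ∈ AddSubgroup.closure (Tset S k) →
    x * r ∈ AddSubgroup.closure (Tset S k) := by
  intro k
  induction k with
  | zero => intro r x _; rw [closure_T0]; trivial
  | succ k ih =>
    intro r x hx
    refine AddSubgroup.closure_induction ?_ ?_ ?_ ?_ hx
    · intro t ht
      obtain ⟨x0, y, hy, b, hb, rfl⟩ := Tsucc_decomp ht
      rw [mul_assoc]
      exact Jgen_mul_mem x0 hy (ih r (AddSubgroup.subset_closure hb))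
    · rw [zero_mul]; exact zero_mem _
    · intro a c _ _ ha hc; rw [add_mul]; exact add_mem ha hc
    · intro a _ ha; rw [neg_mul]; exact neg_mem ha

lemma tsiPow_eq_closure (S : Set M) : ∀ (k : ℕ) (x : MonoidAlgebra ℤ M),
    x ∈ tsiPow (Jideal M S) k ↔ x ∈ AddSubgroup.closure (Tset S k) := by
  intro k
  induction k with
  | zero =>
    intro x
    rw [closure_T0]
    exact iff_of_true (TwoSidedIdeal.mem_top _) trivial
  | succ k ih =>
    have key : ∀ a ∈ Jideal M S, ∀ b ∈ AddSubgroup.closure (Tset S k),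
        a * b ∈ AddSubgroup.closure (Tset S (k + 1)) := by
      intro a ha
      let A : TwoSidedIdeal (MonoidAlgebra ℤ M) := TwoSidedIdeal.mk'
        {a : MonoidAlgebra ℤ M | ∀ b ∈ AddSubgroup.closure (Tset S k),
          a * b ∈ AddSubgroup.closure (Tset S (k + 1))}
        (fun b hb => by rw [zero_mul]; exact AddSubgroup.zero_mem _)
        (fun h1 h2 b hb => by rw [add_mul]; exact add_mem (h1 b hb) (h2 b hb))
        (fun h1 b hb => by rw [neg_mul]; exact neg_mem (h1 b hb))
        (fun h1 b hb => by rw [mul_assoc]; exact mul_mem_closure_Tset _ (h1 b hb))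
        (fun h1 b hb => by rw [mul_assoc]; exact h1 _ (mul_mem_closure_Tset _ hb))
      have haA : a ∈ A := by
        refine TwoSidedIdeal.mem_span_iff.mp ha A ?_
        rintro z ⟨y, hyS, rfl⟩
        rw [SetLike.mem_coe, TwoSidedIdeal.mem_mk']
        intro b hb
        have := Jgen_mul_mem (S := S) (1 : M) hyS hb
        rwa [map_one, one_mul] at this
      rwa [TwoSidedIdeal.mem_mk'] at haA
    intro x
    constructor
    · intro hx
      rw [show tsiPow (Jideal M S) (k + 1) = TwoSidedIdeal.span
        {x : MonoidAlgebra ℤ M | ∃ a ∈ Jideal M S, ∃ b ∈ tsiPow (Jideal M S) k, x = a * b}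
        from rfl] at hx
      let I : TwoSidedIdeal (MonoidAlgebra ℤ M) := TwoSidedIdeal.mk'
        (AddSubgroup.closure (Tset S (k + 1)) : Set (MonoidAlgebra ℤ M))
        (AddSubgroup.zero_mem _)
        (fun ha hb => add_mem ha hb)
        (fun ha => neg_mem ha)
        (fun hb => mul_mem_closure_Tset _ hb)
        (fun ha => closure_Tset_mul_mem (k + 1) _ ha)
      have hxI := TwoSidedIdeal.mem_span_iff.mp hx I ?_
      · rw [TwoSidedIdeal.mem_mk'] at hxI
        exact hxI
      · rintro z ⟨a, ha, b, hb, rfl⟩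
        rw [SetLike.mem_coe, TwoSidedIdeal.mem_mk']
        exact key a ha b ((ih b).mp hb)
    · intro hx
      refine AddSubgroup.closure_induction ?_ ?_ ?_ ?_ hx
      · intro t ht
        obtain ⟨x0, y, hyS, b, hb, rfl⟩ := Tsucc_decomp ht
        rw [show tsiPow (Jideal M S) (k + 1) = TwoSidedIdeal.span
          {x : MonoidAlgebra ℤ M | ∃ a ∈ Jideal M S, ∃ b ∈ tsiPow (Jideal M S) k, x = a * b}
          from rfl]
        refine TwoSidedIdeal.subset_span ⟨_, ?_, b, (ih b).mpr (AddSubgroup.subset_closure hb),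
          rfl⟩
        exact TwoSidedIdeal.mul_mem_left _ _ _
          (TwoSidedIdeal.subset_span ⟨y, hyS, rfl⟩)
      · exact TwoSidedIdeal.zero_mem _
      · intro a b _ _ ha hb; exact TwoSidedIdeal.add_mem _ ha hb
      · intro a _ ha; exact TwoSidedIdeal.neg_mem _ ha

/-- The alternating corner sum of a word-form cell equals the corresponding
product of binomials. -/
lemma sum_corners {k : ℕ} (φ : Cube k → M)
    (x : Fin (k + 1) → M) (y : Fin k → M) (σ : Equiv.Perm (Fin k))
    (hφ : ∀ b, φ b = x 0 *
      (List.ofFn (fun i : Fin k => (if b (σ i) then y i else 1) * x i.succ)).prod) :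
    ∑ b : Cube k, ((-1 : ℤ) ^ cnt b) • MonoidAlgebra.of ℤ M (φ b) =
      MonoidAlgebra.of ℤ M (x 0) *
        (List.ofFn fun i : Fin k =>
          (1 - MonoidAlgebra.of ℤ M (y i)) * MonoidAlgebra.of ℤ M (x i.succ)).prod := by
  have step1 : ∀ b : Cube k, MonoidAlgebra.of ℤ M (φ b) =
      MonoidAlgebra.of ℤ M (x 0) * (List.ofFn fun i : Fin k =>
        (if b (σ i) then MonoidAlgebra.of ℤ M (y i) else 1)
          * MonoidAlgebra.of ℤ M (x i.succ)).prod := by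
    intro b
    rw [hφ b, map_mul, map_list_prod, List.map_ofFn]
    refine congrArg (MonoidAlgebra.of ℤ M (x 0) * ·)
      (congrArg List.prod (congrArg List.ofFn (funext fun i => ?_)))
    simp only [Function.comp_apply, map_mul, apply_ite (MonoidAlgebra.of ℤ M), map_one]
  simp only [step1]
  let eb : Cube k ≃ Cube k :=
    ⟨fun b i => b (σ.symm i), fun b i => b (σ i),
      fun b => funext fun i => by simp, fun b => funext fun i => by simp⟩
  rw [← Equiv.sum_comp eb]
  have step2 : ∀ c : Cube k,
      ((-1 : ℤ) ^ cnt (eb c)) • (MonoidAlgebra.of ℤ M (x 0) *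
        (List.ofFn fun i : Fin k =>
          (if eb c (σ i) then MonoidAlgebra.of ℤ M (y i) else 1)
            * MonoidAlgebra.of ℤ M (x i.succ)).prod) =
      ((-1 : ℤ) ^ cnt c) • (MonoidAlgebra.of ℤ M (x 0) *
        (List.ofFn fun i : Fin k =>
          (if c i then MonoidAlgebra.of ℤ M (y i) else 1)
            * MonoidAlgebra.of ℤ M (x i.succ)).prod) := by
    intro c
    have hcnt : cnt (eb c) = cnt c := cnt_comp_perm σ.symm c
    have harg : ∀ i, eb c (σ i) = c i := fun i => by
      show c (σ.symm (σ i)) = c i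
      rw [Equiv.symm_apply_apply]
    rw [hcnt]
    refine congrArg ((-1 : ℤ) ^ cnt c • ·) (congrArg (MonoidAlgebra.of ℤ M (x 0) * ·)
      (congrArg List.prod (congrArg List.ofFn (funext fun i => ?_))))
    rw [harg i]
  rw [Finset.sum_congr rfl fun c _ => step2 c]
  exact expand_aux k (MonoidAlgebra.of ℤ M (x 0))
    (fun i => MonoidAlgebra.of ℤ M (y i)) (fun i => MonoidAlgebra.of ℤ M (x i.succ))

/-- The corners of the `n`-cube, as an equivalence with maps from the `0`-cube. -/
def cornerEquiv (n : ℕ) : (cubeObj 0 ⟶ cubeObj n) ≃ Cube n where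
  toFun f := f.1 (fun i => i.elim0)
  invFun b := ⟨fun _ => b, Fin.elim0, b, fun a => a.elim0, fun _ i => i.elim0,
    by rintro _ ⟨c, rfl⟩ i _; rfl⟩
  left_inv f := by
    apply Subtype.ext
    funext c
    have hc : (fun i : Fin 0 => i.elim0) = c := Subsingleton.elim (α := Cube 0) _ _
    exact congrArg f.1 hc
  right_inv b := rfl

lemma cubeWeight_eq {n : ℕ} (f : cubeObj 0 ⟶ cubeObj (n + 1)) :
    cubeWeight f = cnt (cornerEquiv (n + 1) f) := by
  rw [cubeWeight, Finset.card_filter]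
  rfl

/-- The `0`-cells of the word-form complex are just the monoid elements. -/
def wf0Equiv (M : Type) [Monoid M] (S : Set M) : WordForm M S 0 ≃ M where
  toFun φ := φ.1 (fun i => i.elim0)
  invFun m := ⟨fun _ => m, fun _ => m, Fin.elim0, Equiv.refl _, fun i => i.elim0,
    fun b => by simp⟩
  left_inv φ := Subtype.ext (funext fun b => congrArg φ.1 (Subsingleton.elim _ b))
  right_inv m := rfl

end MCFT
/-- Let `M` be a monoid with generating set `S`, and let `Y` be the cubical
complex of the generating set: its `n`-cells are the functions `Cₙ → M` of word form, and
cube maps act by precomposition.  Then for every `n ≥ 0`, `Uₙ(Y)` is isomorphic as an abelian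
group to `ℤ[M]/J^{n+1}`, where `J` is the two-sided ideal of the monoid ring `ℤ[M]` generated
by the elements `1 − y` for `y ∈ S`. -/
theorem monoid_complex_finite_type (M : Type) [Monoid M] (S : Set M)
    (hgen : Submonoid.closure S = ⊤)
    (Y : CubicalComplex)
    (e : ∀ k : ℕ, Y.obj (op (cubeObj k)) ≃ WordForm M S k)
    (hmap : ∀ (m k : ℕ) (a : cubeObj m ⟶ cubeObj k) (φ : Y.obj (op (cubeObj k))),
      (e m (Y.map a.op φ)).1 = (e k φ).1 ∘ a.1)
    (n : ℕ) :
    Nonempty (UGroup Y n ≃+ JQuot M S n) := by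
  classical
  -- the evaluation equivalence between `0`-cells and monoid elements
  let ev : Y.obj (op (cubeObj 0)) ≃ M := (e 0).trans (MCFT.wf0Equiv M S)
  -- the additive equivalence between the free abelian group on `0`-cells and `ℤ[M]`
  let E : FreeAbelianGroup (Y.obj (op (cubeObj 0))) ≃+ MonoidAlgebra ℤ M :=
    (FreeAbelianGroup.equivFinsupp _).trans
      ((Finsupp.domCongr ev : _ ≃+ (M →₀ ℤ)).trans MonoidAlgebra.coeffAddEquiv.symm : _ ≃+ MonoidAlgebra ℤ M)
  have hEof : ∀ a, E (FreeAbelianGroup.of a) = MonoidAlgebra.of ℤ M (ev a) := by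
    intro a
    show MonoidAlgebra.coeffAddEquiv.symm
      ((Finsupp.domCongr ev) ((FreeAbelianGroup.equivFinsupp _) (FreeAbelianGroup.of a))) =
      MonoidAlgebra.of ℤ M (ev a)
    rw [FreeAbelianGroup.equivFinsupp_apply, FreeAbelianGroup.toFinsupp_of]
    simp [Finsupp.domCongr_apply, MonoidAlgebra.of_apply]
  -- `E` of the relation element of a cell
  have hrel : ∀ c : Y.obj (op (cubeObj (n + 1))),
      E (relationElt Y n c) =
        ∑ b : Cube (n + 1),
          ((-1 : ℤ) ^ MCFT.cnt b) • MonoidAlgebra.of ℤ M ((e (n + 1) c).1 b) := by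
    intro c
    rw [relationElt, map_sum,
      ← Equiv.sum_comp (MCFT.cornerEquiv (n + 1))
        (fun b => ((-1 : ℤ) ^ MCFT.cnt b) • MonoidAlgebra.of ℤ M ((e (n + 1) c).1 b))]
    refine Finset.sum_congr rfl fun f _ => ?_
    rw [map_zsmul, hEof, MCFT.cubeWeight_eq]
    congr 2
    show (e 0 (Y.map f.op c)).1 (fun i => i.elim0) = (e (n + 1) c).1 (f.1 fun i => i.elim0)
    rw [hmap 0 (n + 1) f c]
    rfl
  -- the image of the relation elements is exactly the set of binomial products
  have himg : ∀ c : Y.obj (op (cubeObj (n + 1))),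
      E (relationElt Y n c) ∈ MCFT.Tset S (n + 1) := by
    intro c
    obtain ⟨x, y, σ, hy, hφ⟩ := (e (n + 1) c).2
    rw [hrel c, MCFT.sum_corners ((e (n + 1) c).1) x y σ hφ]
    exact ⟨x, y, hy, rfl⟩
  have hsur : ∀ t ∈ MCFT.Tset S (n + 1), ∃ c, E (relationElt Y n c) = t := by
    rintro t ⟨x, y, hy, rfl⟩
    have hw : IsWordForm M S (n + 1) (fun b => x 0 *
        (List.ofFn fun i : Fin (n + 1) => (if b i then y i else 1) * x i.succ).prod) :=
      ⟨x, y, Equiv.refl _, hy, fun b => rfl⟩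
    refine ⟨(e (n + 1)).symm (⟨fun b => x 0 *
      (List.ofFn fun i : Fin (n + 1) => (if b i then y i else 1) * x i.succ).prod,
      hw⟩ : WordForm M S (n + 1)), ?_⟩
    rw [hrel]
    exact MCFT.sum_corners _ x y (Equiv.refl _) (fun b =>
      (congrArg (fun w : WordForm M S (n + 1) => w.1 b)
        ((e (n + 1)).apply_symm_apply (⟨_, hw⟩ : WordForm M S (n + 1)))).trans rfl)
  -- matching the relation subgroup with the ideal
  have hmapcl : AddSubgroup.map E.toAddMonoidHom (relSubgroup Y n) =
      AddSubgroup.closure (MCFT.Tset S (n + 1)) := by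
    rw [relSubgroup, AddMonoidHom.map_closure]
    refine le_antisymm ?_ ?_
    · rw [AddSubgroup.closure_le]
      rintro _ ⟨_, ⟨c, rfl⟩, rfl⟩
      exact AddSubgroup.subset_closure (himg c)
    · rw [AddSubgroup.closure_le]
      intro t ht
      obtain ⟨c, hc⟩ := hsur t ht
      exact AddSubgroup.subset_closure ⟨relationElt Y n c, ⟨c, rfl⟩, hc⟩
  -- the composite map to the quotient ring
  let π : FreeAbelianGroup (Y.obj (op (cubeObj 0))) →+ JQuot M S n :=
    (JQuotMk M S n).toAddMonoidHom.comp E.toAddMonoidHom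
  have hmk0 : ∀ z : MonoidAlgebra ℤ M,
      JQuotMk M S n z = 0 ↔ z ∈ tsiPow (Jideal M S) (n + 1) := by
    intro z
    rw [show (0 : JQuot M S n) = JQuotMk M S n 0 from (map_zero _).symm]
    constructor
    · intro h
      have h2 : (tsiPow (Jideal M S) (n + 1)).ringCon z 0 := by
        rwa [← RingCon.eq]
      rwa [TwoSidedIdeal.mem_iff]
    · intro h
      have h2 : (tsiPow (Jideal M S) (n + 1)).ringCon z 0 := h
      exact (RingCon.eq _).mpr h2
  have hker : π.ker = relSubgroup Y n := by
    ext a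
    have h1 : a ∈ π.ker ↔ E a ∈ tsiPow (Jideal M S) (n + 1) := by
      rw [AddMonoidHom.mem_ker]
      exact hmk0 (E a)
    rw [h1, MCFT.tsiPow_eq_closure S (n + 1) (E a), ← hmapcl]
    constructor
    · intro h
      obtain ⟨b, hb, hba⟩ := AddSubgroup.mem_map.mp h
      have hba' : b = a := E.injective hba
      rwa [hba'] at hb
    · intro h
      exact AddSubgroup.mem_map.mpr ⟨a, h, rfl⟩
  have hπs : Function.Surjective π := by
    intro q
    obtain ⟨z, hz⟩ := Quotient.exists_rep q
    exact ⟨E.symm z, by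
      show JQuotMk M S n (E (E.symm z)) = q
      rw [E.apply_symm_apply]
      exact hz⟩
  exact ⟨(QuotientAddGroup.quotientAddEquivOfEq hker.symm).trans
    (QuotientAddGroup.quotientKerEquivOfSurjective π hπs)⟩
end
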